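/- Let R be a discrete valuation ring with uniformizer t, let A be a commutative R-algebra that is flat as an R-module, and let s ∈ A be a non-zerodivisor on A. Then the quotient A/sA is flat as an R-module if and only if the image of s in A/tA is a non-zerodivisor on A/tA. -/

import Mathlib

open TensorProduct LinearMap

/-- Core symmetry: if `s` is a non-zerodivisor, and `s ∣ T*a → s ∣ a` always, then
`T ∣ s*a → T ∣ a` always. -/
private lemma core_dir {A : Type*} [CommRing A] {s T : A}
    (hs : ∀ a : A, s * a = 0 → a = 0)
    (H : ∀ a : A, s ∣ T * a → s ∣ a) :
    ∀ a : A, T ∣ s * a → T ∣ a := by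
  intro a ⟨b, hb⟩
  obtain ⟨c, rfl⟩ := H b ⟨a, hb.symm⟩
  refine ⟨c, ?_⟩
  have h0 : s * (a - T * c) = 0 := by linear_combination hb
  exact (sub_eq_zero.mp (hs _ h0))

/-- Over a DVR with uniformizer `t`, a module is flat iff `t` acts injectively. -/
private lemma flat_iff_isSMulRegular
    {R : Type*} [CommRing R] [IsDomain R] [IsDiscreteValuationRing R]
    {t : R} (ht : Irreducible t)
    (M : Type*) [AddCommGroup M] [Module R M] :
    Module.Flat R M ↔ IsSMulRegular M t := by
  constructor
  · intro hM
    have hreg : IsSMulRegular R t := fun x y hxy => by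
      simpa [smul_eq_mul] using mul_left_cancel₀ ht.ne_zero (by simpa [smul_eq_mul] using hxy)
    have := hreg.rTensor (R := R) (M := M)
    exact ((TensorProduct.lid R M).isSMulRegular_congr t).mp this
  · intro hreg
    rw [Module.Flat.iff_rTensor_injective']
    intro I
    by_cases hI : I = ⊥
    · subst hI
      intro x y _
      exact Subsingleton.elim x y
    · obtain ⟨n, rfl⟩ := IsDiscreteValuationRing.ideal_eq_span_pow_irreducible hI ht
      have htn : (t : R) ^ n ≠ 0 := pow_ne_zero n ht.ne_zero
      set e := LinearEquiv.toSpanNonzeroSingleton R R (t ^ n) htn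
      have hregn : IsSMulRegular M (t ^ n) := hreg.pow n
      have key : ∀ m : M,
          (TensorProduct.lid R M)
            ((rTensor M (Ideal.span {t ^ n}).subtype)
              ((LinearEquiv.rTensor M e) ((TensorProduct.lid R M).symm m)))
            = (t ^ n) • m := by
        intro m
        simp only [e, TensorProduct.lid_symm_apply, LinearEquiv.rTensor_tmul,
          rTensor_tmul, Submodule.coe_subtype, TensorProduct.lid_tmul]
        rw [show ((LinearEquiv.toSpanNonzeroSingleton R R (t ^ n) htn) 1 : R) = t ^ n by
          rw [LinearEquiv.toSpanNonzeroSingleton_apply]; simp]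
      have hinj : Function.Injective (⇑(TensorProduct.lid R M) ∘
          ⇑(rTensor M (Ideal.span {t ^ n}).subtype) ∘
          ⇑(LinearEquiv.rTensor M e) ∘ ⇑(TensorProduct.lid R M).symm) := by
        have : (⇑(TensorProduct.lid R M) ∘
            ⇑(rTensor M (Ideal.span {t ^ n}).subtype) ∘
            ⇑(LinearEquiv.rTensor M e) ∘ ⇑(TensorProduct.lid R M).symm) =
            fun m => (t ^ n) • m := funext key
        rw [this]
        exact hregn
      have h1 := hinj.of_comp
      have h2 : Function.Injective (⇑(rTensor M (Ideal.span {t ^ n}).subtype) ∘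
          (⇑(LinearEquiv.rTensor M e) ∘ ⇑(TensorProduct.lid R M).symm)) := h1
      exact h2.of_comp_right ((LinearEquiv.rTensor M e).surjective.comp
        (TensorProduct.lid R M).symm.surjective)

/-- Let `R` be a DVR with uniformizer `t`, let `A` be a flat commutative `R`-algebra,
and let `s ∈ A` be a non-zerodivisor on `A`.  Then `A ⧸ sA` is flat as an `R`-module
if and only if the image of `s` in `A ⧸ tA` is a non-zerodivisor on `A ⧸ tA`. -/
theorem quotient_flat_iff_nonZeroDivisor_on_fiber
    {R : Type*} [CommRing R] [IsDomain R] [IsDiscreteValuationRing R]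
    {t : R} (ht : Irreducible t)
    {A : Type*} [CommRing A] [Algebra R A] [Module.Flat R A]
    {s : A} (hs : s ∈ nonZeroDivisors A) :
    Module.Flat R (A ⧸ Ideal.span {s}) ↔
      Ideal.Quotient.mk (Ideal.span {algebraMap R A t}) s ∈
        nonZeroDivisors (A ⧸ Ideal.span {algebraMap R A t}) := by
  set T : A := algebraMap R A t with hT
  -- t acts regularly on A since A is flat
  have htA : IsSMulRegular A t := (flat_iff_isSMulRegular ht A).mp ‹_›
  have hTreg : ∀ a : A, T * a = 0 → a = 0 := by
    intro a ha
    have h0 : t • a = t • (0 : A) := by simp [Algebra.smul_def, ← hT, ha]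
    simpa using htA h0
  have hsreg : ∀ a : A, s * a = 0 → a = 0 := fun a ha => mem_nonZeroDivisors_iff_right.mp hs a (by rwa [mul_comm] at ha)
  rw [flat_iff_isSMulRegular ht]
  -- unfold both sides to divisibility statements
  have lhs_iff : IsSMulRegular (A ⧸ Ideal.span {s}) t ↔
      ∀ a : A, s ∣ T * a → s ∣ a := by
    rw [isSMulRegular_iff_right_eq_zero_of_smul]
    constructor
    · intro h a hdvd
      have := h (Ideal.Quotient.mk _ a) ?_
      · rwa [Ideal.Quotient.eq_zero_iff_mem, Ideal.mem_span_singleton] at this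
      · have : (t : R) • (Ideal.Quotient.mk (Ideal.span {s}) a) =
            Ideal.Quotient.mk (Ideal.span {s}) (T * a) := by
          rw [Algebra.smul_def, IsScalarTower.algebraMap_apply R A (A ⧸ Ideal.span {s}),
            Ideal.Quotient.algebraMap_eq, ← map_mul]
        rw [this, Ideal.Quotient.eq_zero_iff_mem, Ideal.mem_span_singleton]
        exact hdvd
    · intro h x hx
      obtain ⟨a, rfl⟩ := Ideal.Quotient.mk_surjective x
      rw [Ideal.Quotient.eq_zero_iff_mem, Ideal.mem_span_singleton]
      apply h
      rw [← Ideal.mem_span_singleton, ← Ideal.Quotient.eq_zero_iff_mem, map_mul]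
      have heq : algebraMap R (A ⧸ Ideal.span {s}) t = Ideal.Quotient.mk (Ideal.span {s}) T := by
        rw [IsScalarTower.algebraMap_apply R A (A ⧸ Ideal.span {s}), Ideal.Quotient.algebraMap_eq]
      rw [← heq, ← Algebra.smul_def]
      exact hx
  have rhs_iff : (Ideal.Quotient.mk (Ideal.span {T}) s ∈
      nonZeroDivisors (A ⧸ Ideal.span {T})) ↔ ∀ a : A, T ∣ s * a → T ∣ a := by
    rw [mem_nonZeroDivisors_iff_right]
    constructor
    · intro h a hdvd
      have := h (Ideal.Quotient.mk _ a) ?_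
      · rwa [Ideal.Quotient.eq_zero_iff_mem, Ideal.mem_span_singleton] at this
      · rw [← map_mul, Ideal.Quotient.eq_zero_iff_mem, Ideal.mem_span_singleton, mul_comm]
        exact hdvd
    · intro h x hx
      obtain ⟨a, rfl⟩ := Ideal.Quotient.mk_surjective x
      rw [Ideal.Quotient.eq_zero_iff_mem, Ideal.mem_span_singleton]
      apply h
      rw [← Ideal.mem_span_singleton, ← Ideal.Quotient.eq_zero_iff_mem, map_mul, mul_comm]
      rwa [← map_mul] at hx
  rw [lhs_iff, rhs_iff]
  exact ⟨core_dir hsreg, core_dir hTreg⟩
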